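/- For every z > 0, the right-hand derivative of H⁻¹ at z exists and equals 1/(G(H⁻¹(z)−) − 1), where G(x−) = sup_{u < x} G(u) denotes the left-hand limit of G at x. -/

import Mathlib

open MeasureTheory Filter Set

set_option maxHeartbeats 1000000 in
/-- for every `z > 0` the right-hand derivative of `H⁻¹` at `z` exists and
equals `1 / (G(H⁻¹(z)-) - 1)`, where `G(x-) = sup_{u < x} G u` is the left limit of `G`. -/
theorem stmt_4
    (G : ℝ → ℝ) (ystar : ℝ)
    (hmono : Monotone G)
    (hrc : ∀ y, ContinuousWithinAt G (Set.Ici y) y)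
    (hG0 : ∀ y, 0 ≤ G y) (hG1 : ∀ y, G y ≤ 1)
    (hstar : ∀ y, G y = 1 ↔ ystar ≤ y)
    (H : ℝ → ℝ)
    (hH : ∀ y, H y = ∫ η in Set.Ioc y ystar, (1 - G η))
    (Hinv : ℝ → ℝ)
    (hinv_mem : ∀ z, 0 ≤ z → Hinv z ≤ ystar)
    (hinv_right : ∀ z, 0 ≤ z → H (Hinv z) = z)
    (hinv_left : ∀ y, y ≤ ystar → Hinv (H y) = y) :
    ∀ z : ℝ, 0 < z →
      HasDerivWithinAt Hinv (1 / (sSup (G '' Set.Iio (Hinv z)) - 1)) (Set.Ici z) z := by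
  have hf_meas : Measurable (fun η : ℝ => 1 - G η) := measurable_const.sub hmono.measurable
  have hint : ∀ a b : ℝ, IntegrableOn (fun η => 1 - G η) (Set.Ioc a b) := by
    intro a b
    apply Measure.integrableOn_of_bounded (M := 1)
    · rw [Real.volume_Ioc]; exact ENNReal.ofReal_ne_top
    · exact hf_meas.aestronglyMeasurable
    · filter_upwards with x
      rw [Real.norm_eq_abs, abs_le]
      constructor
      · linarith [hG1 x]
      · linarith [hG0 x]
  have hdisj : ∀ a b c : ℝ, Disjoint (Set.Ioc a b) (Set.Ioc b c) := by
    intro a b c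
    rw [Set.disjoint_left]
    rintro x ⟨_, h1⟩ ⟨h2, _⟩
    exact absurd h2 (not_lt.mpr h1)
  have hsplit : ∀ a b : ℝ, a ≤ b → b ≤ ystar →
      H a = (∫ η in Set.Ioc a b, (1 - G η)) + H b := by
    intro a b hab hb
    rw [hH a, hH b, ← MeasureTheory.setIntegral_union (hdisj a b ystar) measurableSet_Ioc
      (hint a b) (hint b ystar), Set.Ioc_union_Ioc_eq_Ioc hab hb]
  have hH_anti : ∀ a b : ℝ, a ≤ b → b ≤ ystar → H b ≤ H a := by
    intro a b hab hb
    rw [hsplit a b hab hb]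
    have h0 : 0 ≤ ∫ η in Set.Ioc a b, (1 - G η) :=
      setIntegral_nonneg measurableSet_Ioc (fun x _ => by linarith [hG1 x])
    linarith
  intro z hz
  set y := Hinv z with hy
  set L := sSup (G '' Set.Iio y) with hLdef
  have hy_le : y ≤ ystar := hinv_mem z hz.le
  have hHy : H y = z := hinv_right z hz.le
  have hHystar : H ystar = 0 := by rw [hH]; simp
  have hy_lt : y < ystar := by
    rcases lt_or_eq_of_le hy_le with h | h
    · exact h
    · exfalso; rw [h, hHystar] at hHy; linarith
  have hGy : G y < 1 :=
    lt_of_le_of_ne (hG1 y) (fun h => absurd ((hstar y).mp h) (not_le.mpr hy_lt))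
  have hLbdd : BddAbove (G '' Set.Iio y) := by
    refine ⟨1, ?_⟩; rintro t ⟨u, _, rfl⟩; exact hG1 u
  have hLne : (G '' Set.Iio y).Nonempty := ⟨G (y - 1), ⟨y - 1, by simp, rfl⟩⟩
  have hL_le : L ≤ G y := by
    apply csSup_le hLne; rintro t ⟨u, hu, rfl⟩; exact hmono (le_of_lt hu)
  have hL1 : L < 1 := lt_of_le_of_lt hL_le hGy
  have hGle : ∀ x, x < y → G x ≤ L := fun x hx => le_csSup hLbdd ⟨x, hx, rfl⟩
  -- lower bound on integrals ending at y
  have hlow : ∀ a b : ℝ, a < b → b ≤ y →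
      (b - a) * (1 - L) ≤ ∫ η in Set.Ioc a b, (1 - G η) := by
    intro a b hab hb
    rw [MeasureTheory.integral_Ioc_eq_integral_Ioo]
    have hmonoint := MeasureTheory.setIntegral_mono_on
      (f := fun _ : ℝ => 1 - L) (g := fun η => 1 - G η) (s := Set.Ioo a b) (μ := volume)
      (integrableOn_const (by rw [Real.volume_Ioo]; exact ENNReal.ofReal_ne_top))
      ((hint a b).mono_set Set.Ioo_subset_Ioc_self) measurableSet_Ioo
      (fun x hx => by
        have h := hGle x (lt_of_lt_of_le hx.2 hb)
        show 1 - L ≤ 1 - G x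
        linarith)
    calc (b - a) * (1 - L) = ∫ _ in Set.Ioo a b, (1 - L) := by
          rw [MeasureTheory.setIntegral_const, Real.volume_real_Ioo_of_le (by linarith), smul_eq_mul]
      _ ≤ _ := hmonoint
  -- upper bound on integrals starting at ≥ c
  have hup : ∀ c a b : ℝ, c ≤ a → a < b →
      (∫ η in Set.Ioc a b, (1 - G η)) ≤ (b - a) * (1 - G c) := by
    intro c a b hca hab
    have hmonoint := MeasureTheory.setIntegral_mono_on
      (f := fun η => 1 - G η) (g := fun _ : ℝ => 1 - G c) (s := Set.Ioc a b) (μ := volume)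
      (hint a b)
      (integrableOn_const (by rw [Real.volume_Ioc]; exact ENNReal.ofReal_ne_top))
      measurableSet_Ioc
      (fun x hx => by
        have h : G c ≤ G x := hmono (le_of_lt (lt_of_le_of_lt hca hx.1))
        show 1 - G x ≤ 1 - G c
        linarith)
    calc (∫ η in Set.Ioc a b, (1 - G η)) ≤ ∫ _ in Set.Ioc a b, (1 - G c) := hmonoint
      _ = (b - a) * (1 - G c) := by
          rw [MeasureTheory.setIntegral_const, Real.volume_real_Ioc_of_le (by linarith), smul_eq_mul]
  rw [hasDerivWithinAt_iff_tendsto_slope]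
  have hset : Set.Ici z \ {z} = Set.Ioi z := by
    ext x; simp only [Set.mem_diff, Set.mem_Ici, Set.mem_singleton_iff, Set.mem_Ioi]
    constructor
    · rintro ⟨h1, h2⟩; exact lt_of_le_of_ne h1 (Ne.symm h2)
    · intro h; exact ⟨h.le, ne_of_gt h⟩
  rw [hset, Metric.tendsto_nhdsWithin_nhds]
  intro ε hε
  -- choose c < y with G c close to L
  obtain ⟨t, ⟨c, hcy, rfl⟩, hc⟩ :=
    exists_lt_of_lt_csSup hLne (show L - ε * (1 - L) ^ 2 < L by
      have h2 : (0:ℝ) < (1 - L) ^ 2 := pow_pos (by linarith) 2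
      have := mul_pos hε h2
      linarith)
  have hcy : c < y := hcy
  have hGcL : G c ≤ L := hGle c hcy
  -- δ := H c - z > 0
  have hHc : H c = (∫ η in Set.Ioc c y, (1 - G η)) + z := by
    rw [hsplit c y hcy.le hy_le, hHy]
  have hδpos : 0 < H c - z := by
    have := hlow c y hcy le_rfl
    have hyc : 0 < (y - c) * (1 - L) := by nlinarith
    rw [hHc]; linarith
  refine ⟨H c - z, hδpos, ?_⟩
  intro z' hz' hdist
  have hz'gt : z < z' := hz'
  have hz'lt : z' < H c := by
    rw [Real.dist_eq, abs_lt] at hdist; linarith [hdist.2]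
  set y' := Hinv z' with hy'
  have hHy' : H y' = z' := hinv_right z' (by linarith)
  have hy'_le : y' ≤ ystar := hinv_mem z' (by linarith)
  have hy'y : y' < y := by
    by_contra h
    push_neg at h
    have := hH_anti y y' h hy'_le
    rw [hHy, hHy'] at this
    linarith
  have hcy' : c < y' := by
    by_contra h
    push_neg at h
    have := hH_anti y' c h (by linarith)
    rw [hHy'] at this
    linarith
  -- the increment
  set I := ∫ η in Set.Ioc y' y, (1 - G η) with hIdef
  have hIz : I = z' - z := by
    have := hsplit y' y hy'y.le hy_le
    rw [hHy', hHy] at this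
    linarith
  have hIlow : (y - y') * (1 - L) ≤ I := hlow y' y hy'y le_rfl
  have hIup : I ≤ (y - y') * (1 - G c) := hup c y' y hcy'.le hy'y
  have hIpos : 0 < I := by nlinarith
  have hd : 0 < y - y' := by linarith
  -- compute slope and conclude
  rw [Real.dist_eq, slope_def_field]
  have hslope : (Hinv z' - Hinv z) / (z' - z) = (y' - y) / I := by
    rw [hIz]
  rw [hslope]
  have hIne : I ≠ 0 := ne_of_gt hIpos
  have hLne1 : L - 1 ≠ 0 := by linarith
  have h1L : (1:ℝ) - L ≠ 0 := by linarith
  have key : (y' - y) / I - 1 / (L - 1) = (I - (y - y') * (1 - L)) / (I * (1 - L)) := by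
    field_simp
    ring
  rw [key, abs_of_nonneg (div_nonneg (by linarith) (by nlinarith))]
  rw [div_lt_iff₀ (by nlinarith : 0 < I * (1 - L))]
  nlinarith [mul_lt_mul_of_pos_left hc hd, mul_le_mul_of_nonneg_right hIlow (le_of_lt (by linarith : (0:ℝ) < 1 - L))]
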